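/- Let D be a positive integer, w, x ∈ ℝ^D, and S ⊆ ℝ^D a linear subspace such that the orthogonal projection P_S(w) of w onto S is nonzero. Then the infimum of ‖δ‖₂ over all δ ∈ S satisfying ⟨w, x + δ⟩ = 0 equals |⟨w, x⟩| / ‖P_S(w)‖₂. -/

import Mathlib

open MeasureTheory InnerProductSpace

/-- For a linear classifier `f(x) = ⟪w, x⟫` on `ℝ^D`, the margin of `x`
in a linear subspace `S` (the infimum of `‖δ‖₂` over `δ ∈ S` with `⟪w, x + δ⟫ = 0`)
equals `|⟪w, x⟫| / ‖P_S w‖₂`, provided the orthogonal projection `P_S w` is nonzero. -/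
theorem margin_linear_classifier (D : ℕ) (hD : 0 < D)
    (w x : EuclideanSpace ℝ (Fin D)) (S : Submodule ℝ (EuclideanSpace ℝ (Fin D)))
    (hw : (S.orthogonalProjectionOnto w : EuclideanSpace ℝ (Fin D)) ≠ 0) :
    sInf {r : ℝ | ∃ δ ∈ S, inner ℝ w (x + δ) = (0 : ℝ) ∧ ‖δ‖ = r} =
      |inner ℝ w x| / ‖(S.orthogonalProjectionOnto w : EuclideanSpace ℝ (Fin D))‖ := by
  set p : EuclideanSpace ℝ (Fin D) := (S.orthogonalProjectionOnto w : EuclideanSpace ℝ (Fin D))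
    with hp
  have hpS : p ∈ S := (S.orthogonalProjectionOnto w).2
  have hpnorm : (0 : ℝ) < ‖p‖ := norm_pos_iff.mpr hw
  set c : ℝ := inner ℝ w x with hc
  -- key: for δ ∈ S, ⟪w, δ⟫ = ⟪p, δ⟫
  have key : ∀ δ ∈ S, (inner ℝ w δ : ℝ) = inner ℝ p δ := by
    intro δ hδ
    have := S.starProjection_inner_eq_zero w δ hδ
    have h2 : (inner ℝ (w - p) δ : ℝ) = 0 := this
    rw [inner_sub_left] at h2
    linarith
  -- the attaining point
  set δ₀ : EuclideanSpace ℝ (Fin D) := (-(c / ‖p‖ ^ 2)) • p with hδ₀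
  have hδ₀S : δ₀ ∈ S := S.smul_mem _ hpS
  have hinner : (inner ℝ w (x + δ₀) : ℝ) = 0 := by
    rw [inner_add_right, key δ₀ hδ₀S, hδ₀, real_inner_smul_right,
      real_inner_self_eq_norm_sq, ← hc]
    field_simp
    ring
  have hnormδ₀ : ‖δ₀‖ = |c| / ‖p‖ := by
    rw [hδ₀, norm_smul]
    simp only [Real.norm_eq_abs, abs_neg, abs_div]
    rw [abs_of_nonneg (by positivity : (0:ℝ) ≤ ‖p‖ ^ 2)]
    field_simp
  have hmem : |c| / ‖p‖ ∈ {r : ℝ | ∃ δ ∈ S, inner ℝ w (x + δ) = (0 : ℝ) ∧ ‖δ‖ = r} :=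
    ⟨δ₀, hδ₀S, hinner, hnormδ₀⟩
  -- lower bound
  have hlb : ∀ r ∈ {r : ℝ | ∃ δ ∈ S, inner ℝ w (x + δ) = (0 : ℝ) ∧ ‖δ‖ = r},
      |c| / ‖p‖ ≤ r := by
    rintro r ⟨δ, hδS, hδ0, rfl⟩
    rw [inner_add_right, key δ hδS] at hδ0
    have habs : |c| = |(inner ℝ p δ : ℝ)| := by
      have : c = -(inner ℝ p δ : ℝ) := by linarith
      rw [this, abs_neg]
    rw [habs, div_le_iff₀ hpnorm]
    calc |(inner ℝ p δ : ℝ)| ≤ ‖p‖ * ‖δ‖ := abs_real_inner_le_norm p δ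
      _ = ‖δ‖ * ‖p‖ := mul_comm _ _
  exact le_antisymm (csInf_le ⟨_, hlb⟩ hmem) (le_csInf ⟨_, hmem⟩ hlb)
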